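/- Let X be a Banach space, A : D(A) ⊆ X → X a closed linear operator with compact inverse A⁻¹ : X → X, and B : X → X a linear operator with D(B) ⊇ D(A) such that ‖B u‖ ≤ c ‖u‖^{1−α} ‖A u‖^{α} for all u ∈ D(A), some α ∈ [0,1) and c > 0. Then B is A-compact, i.e., for every sequence (uₙ) in D(A) with both (uₙ) and (A uₙ) bounded, (B uₙ) has a convergent subsequence. -/
import Mathlib

/-- If `A` is a closed operator with compact inverse and `‖Bu‖ ≤ c‖u‖^{1-α}‖Au‖^α`
with `α ∈ [0,1)`, then `B` is `A`-compact: any sequence bounded in the graph norm of `A`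
has a subsequence along which `B uₙ` converges. -/
theorem stmt1 {X : Type*} [NormedAddCommGroup X] [NormedSpace ℝ X] [CompleteSpace X]
    (D : Submodule ℝ X) (A : D →ₗ[ℝ] X) (B : X →ₗ[ℝ] X)
    (hclosed : IsClosed (Set.range fun u : D => ((u : X), A u)))
    (Ainv : X →L[ℝ] X) (hAinvcpt : IsCompactOperator Ainv)
    (hmemD : ∀ x : X, Ainv x ∈ D)
    (hright : ∀ x : X, A ⟨Ainv x, hmemD x⟩ = x)
    (hleft : ∀ u : D, Ainv (A u) = (u : X))
    (α c : ℝ) (hα : α ∈ Set.Ico (0 : ℝ) 1) (hc : 0 < c)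
    (hB : ∀ u : D, ‖B u‖ ≤ c * ‖(u : X)‖ ^ (1 - α) * ‖A u‖ ^ α)
    (u : ℕ → D) (M : ℝ)
    (hbd : ∀ n, ‖(u n : X)‖ ≤ M) (hbdA : ∀ n, ‖A (u n)‖ ≤ M) :
    ∃ (φ : ℕ → ℕ) (l : X), StrictMono φ ∧
      Filter.Tendsto (fun n => B (u (φ n))) Filter.atTop (nhds l) := by
  obtain ⟨hα0, hα1⟩ := hα
  -- the set {A uₙ} is bounded
  have hSbd : Bornology.IsBounded (Set.range fun n => A (u n)) := by
    rw [isBounded_iff_forall_norm_le]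
    exact ⟨M, by rintro x ⟨n, rfl⟩; exact hbdA n⟩
  obtain ⟨K, hK, hKsub⟩ := hAinvcpt.image_subset_compact_of_bounded hSbd
  have hmemK : ∀ n, ((u n : X)) ∈ K := by
    intro n
    have : Ainv (A (u n)) ∈ K := hKsub ⟨A (u n), ⟨n, rfl⟩, rfl⟩
    rwa [hleft] at this
  obtain ⟨x, -, φ, hφ, hconv⟩ := hK.tendsto_subseq hmemK
  -- show the sequence B (u (φ n)) is Cauchy
  have hcauchy : CauchySeq fun n => ((u (φ n) : X)) := hconv.cauchySeq
  rw [cauchySeq_iff_tendsto_dist_atTop_0] at hcauchy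
  have hBC : CauchySeq fun n => B (u (φ n)) := by
    rw [cauchySeq_iff_tendsto_dist_atTop_0]
    have hf : Filter.Tendsto (fun t : ℝ => c * t ^ (1 - α) * (2 * M) ^ α)
        (nhds 0) (nhds 0) := by
      have h1 : Filter.Tendsto (fun t : ℝ => t ^ (1 - α)) (nhds 0) (nhds 0) := by
        have := (Real.continuousAt_rpow_const 0 (1 - α) (Or.inr (by linarith))).tendsto
        simpa [Real.zero_rpow (by linarith : (1:ℝ) - α ≠ 0)] using this
      have := (h1.const_mul c).mul_const ((2 * M) ^ α)
      simpa using (by simpa [mul_assoc, mul_comm, mul_left_comm] using this :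
        Filter.Tendsto (fun t : ℝ => c * t ^ (1 - α) * (2 * M) ^ α) (nhds 0) (nhds 0))
    have key : ∀ p : ℕ × ℕ,
        dist (B (u (φ p.1))) (B (u (φ p.2))) ≤
          c * dist ((u (φ p.1) : X)) ((u (φ p.2) : X)) ^ (1 - α) * (2 * M) ^ α := by
      intro ⟨n, m⟩
      set w : D := u (φ n) - u (φ m) with hw
      have hBw : B ((u (φ n) : X)) - B ((u (φ m) : X)) = B (w : X) := by
        simp [hw, map_sub]
      have hAw : ‖A w‖ ≤ 2 * M := by
        have : A w = A (u (φ n)) - A (u (φ m)) := by simp [hw, map_sub]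
        rw [this]
        calc ‖A (u (φ n)) - A (u (φ m))‖ ≤ ‖A (u (φ n))‖ + ‖A (u (φ m))‖ := norm_sub_le _ _
          _ ≤ 2 * M := by have := hbdA (φ n); have := hbdA (φ m); linarith
      have hM0 : (0:ℝ) ≤ M := le_trans (norm_nonneg _) (hbd 0)
      calc dist (B (u (φ n) : X)) (B (u (φ m) : X))
          = ‖B (w : X)‖ := by rw [dist_eq_norm, hBw]
        _ ≤ c * ‖(w : X)‖ ^ (1 - α) * ‖A w‖ ^ α := hB w
        _ ≤ c * ‖(w : X)‖ ^ (1 - α) * (2 * M) ^ α := by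
            have h2 := Real.rpow_le_rpow (norm_nonneg (A w)) hAw hα0
            have hnn : 0 ≤ c * ‖(w : X)‖ ^ (1 - α) := by positivity
            exact mul_le_mul_of_nonneg_left h2 hnn
        _ = c * dist ((u (φ n) : X)) ((u (φ m) : X)) ^ (1 - α) * (2 * M) ^ α := by
            rw [dist_eq_norm]; simp [hw]
    have hle : ∀ p : ℕ × ℕ, (0:ℝ) ≤ dist (B (u (φ p.1))) (B (u (φ p.2))) :=
      fun p => dist_nonneg
    exact squeeze_zero hle key (hf.comp hcauchy)
  obtain ⟨l, hl⟩ := cauchySeq_tendsto_of_complete hBC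
  exact ⟨φ, l, hφ, hl⟩
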